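/- Let (𝔡, ⟨·,·⟩) be a quadratic Lie algebra with Cartan 3-form χ(x,y,z) = ⟨[x,y],z⟩. Let 𝓔₊ ⊆ 𝔡 be a subspace on which ⟨·,·⟩ is positive definite, with 𝓔₋ := 𝓔₊^⊥ satisfying 𝔡 = 𝓔₊ ⊕ 𝓔₋ and ⟨·,·⟩ negative definite on 𝓔₋. Let k: 𝔡×𝔡×𝔡 → ℝ be trilinear with (i) k(x,y,z) = −k(x,z,y), (ii) k(x,y,z)+k(y,z,x)+k(z,x,y) = −χ(x,y,z), (iii) ∑_μ k(t_μ, z, t^μ) = 0 for all z, and (iv) k(x, u, v) = 0 whenever u ∈ 𝓔₊ and v ∈ 𝓔₋. Define Ric(x,y) := ½ ∑_{λ,μ} k(t_λ,t_μ,y)(k(t^λ,t^μ,x) − 2k(t^μ,t^λ,x)). Fix a basis (v_j) of 𝓔₊ and a basis (u_i) of 𝓔₋, and let (v^j) be the basis of 𝓔₊ with ⟨v^j, v_l⟩ = δ^j_l and (u^i) the basis of 𝓔₋ with ⟨u^i, u_l⟩ = −δ^i_l. Then for every x ∈ 𝓔₊ and y ∈ 𝓔₋: Ric(x,y) = −∑_{i,j}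 χ(u_i, v_j, x) · χ(u^i, v^j, y). In particular Ric(𝓔₊, 𝓔₋) does not depend on the choice of k satisfying (i)–(iv). -/

import Mathlib

/-- Product-type bilinear form `(p, r) ↦ φ p * (ψ r - 2 * χ r)`. -/
def pairT {D : Type*} [AddCommGroup D] [Module ℝ D] (φ ψ χ : D →ₗ[ℝ] ℝ) :
    D →ₗ[ℝ] D →ₗ[ℝ] ℝ :=
  LinearMap.mk₂ ℝ (fun p r => φ p * (ψ r - 2 * χ r))
    (by intros; simp [map_add]; ring)
    (by intros; simp [map_smul, smul_eq_mul]; ring)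
    (by intros; simp [map_add]; ring)
    (by intros; simp [map_smul, smul_eq_mul]; ring)

@[simp] lemma pairT_apply {D : Type*} [AddCommGroup D] [Module ℝ D]
    (φ ψ χ : D →ₗ[ℝ] ℝ) (p r : D) :
    pairT φ ψ χ p r = φ p * (ψ r - 2 * χ r) := rfl

/-- Change of dual pair for a contraction of a bilinear form. -/
lemma change_pair {D : Type*} [AddCommGroup D] [Module ℝ D]
    (B : D →ₗ[ℝ] D →ₗ[ℝ] ℝ)
    {ι κ : Type*} [Fintype ι] [Fintype κ]
    (b c : ι → D) (bt ct : κ → D)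
    (hL1 : ∀ w : D, ∑ μ, B w (b μ) • c μ = w)
    (hL2 : ∀ w : D, ∑ ν, B (ct ν) w • bt ν = w)
    (T : D →ₗ[ℝ] D →ₗ[ℝ] ℝ) :
    ∑ μ, T (b μ) (c μ) = ∑ ν, T (bt ν) (ct ν) := by
  calc ∑ μ, T (b μ) (c μ)
      = ∑ μ, T (∑ ν, B (ct ν) (b μ) • bt ν) (c μ) := by
        exact Finset.sum_congr rfl fun μ _ => by rw [hL2 (b μ)]
    _ = ∑ μ, ∑ ν, B (ct ν) (b μ) * T (bt ν) (c μ) := by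
        simp [map_sum, LinearMap.sum_apply, LinearMap.smul_apply, smul_eq_mul]
    _ = ∑ ν, ∑ μ, B (ct ν) (b μ) * T (bt ν) (c μ) := Finset.sum_comm
    _ = ∑ ν, T (bt ν) (ct ν) := by
        refine Finset.sum_congr rfl fun ν _ => ?_
        conv_rhs => rw [← hL1 (ct ν)]
        simp [map_sum, map_smul, smul_eq_mul]

/-- **The mixed Ricci tensor in terms of the Cartan 3-form.**
For a generalized metric `𝓔₊` on a quadratic Lie algebra `(𝔡, B)` (with
`𝓔₋ = 𝓔₊^⊥`) and `k` a divergence-free torsion-free metric connection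
compatible with `𝓔₊`, the generalized Ricci tensor satisfies, for `x ∈ 𝓔₊`,
`y ∈ 𝓔₋`:  `Ric(x,y) = −∑_{ij} χ(u_i,v_j,x) · χ(u^i,v^j,y)`,
independently of the choice of such `k`. -/
theorem stmt12 (D : Type*) [LieRing D] [LieAlgebra ℝ D] [FiniteDimensional ℝ D]
    (B : LinearMap.BilinForm ℝ D) (hnd : B.Nondegenerate) (hsymm : B.IsSymm)
    (hinvar : ∀ x y z : D, B ⁅x, y⁆ z = B x ⁅y, z⁆)
    (Eplus : Submodule ℝ D)
    (hpos : ∀ v ∈ Eplus, v ≠ 0 → 0 < B v v)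
    (hneg : ∀ v ∈ B.orthogonal Eplus, v ≠ 0 → B v v < 0)
    (hcompl : IsCompl Eplus (B.orthogonal Eplus))
    (k : D →ₗ[ℝ] D →ₗ[ℝ] D →ₗ[ℝ] ℝ)
    (hskew : ∀ x y z : D, k x y z = - k x z y)
    (htor : ∀ x y z : D, k x y z + k y z x + k z x y = - B ⁅x, y⁆ z)
    (hmetric : ∀ x : D, ∀ u ∈ Eplus, ∀ v ∈ B.orthogonal Eplus, k x u v = 0)
    (ι : Type*) [Fintype ι] [DecidableEq ι] (b : Module.Basis ι ℝ D) (c : ι → D)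
    (hdual : ∀ μ ν : ι, B (c μ) (b ν) = if μ = ν then 1 else 0)
    (hdivfree : ∀ z : D, ∑ m : ι, k (b m) z (c m) = 0)
    (J : Type*) [Fintype J] [DecidableEq J] (vb : Module.Basis J ℝ Eplus)
    (vd : J → D) (hvdmem : ∀ j, vd j ∈ Eplus)
    (hvdual : ∀ j l : J, B (vd j) (vb l) = if j = l then 1 else 0)
    (I : Type*) [Fintype I] [DecidableEq I] (ub : Module.Basis I ℝ (B.orthogonal Eplus))
    (ud : I → D) (hudmem : ∀ i, ud i ∈ B.orthogonal Eplus)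
    (hudual : ∀ i l : I, B (ud i) (ub l) = if i = l then -1 else 0) :
    ∀ x ∈ Eplus, ∀ y ∈ B.orthogonal Eplus,
      (1 / 2 : ℝ) * (∑ l : ι, ∑ m : ι,
          k (b l) (b m) y * (k (c l) (c m) x - 2 * k (c m) (c l) x)) =
        - ∑ i : I, ∑ j : J,
            B ⁅(ub i : D), (vb j : D)⁆ x * B ⁅ud i, vd j⁆ y := by
  intro x hx y hy
  have hs : ∀ p q : D, B p q = B q p := fun p q => LinearMap.BilinForm.isSymm_def.mp hsymm p q
  have horth : ∀ u ∈ Eplus, ∀ v ∈ B.orthogonal Eplus, B u v = 0 := fun u hu v hv => hv u hu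
  have hmix : ∀ a : D, ∀ u ∈ Eplus, ∀ v ∈ B.orthogonal Eplus, k a v u = 0 := by
    intro a u hu v hv
    rw [show k a v u = - k a u v from hskew a v u, hmetric a u hu v hv, neg_zero]
  -- reproduction formula for the pair (b, c)
  have hL1 : ∀ w : D, ∑ μ, B w (b μ) • c μ = w := by
    intro w
    have hb : ∀ ν, B (∑ μ, B w (b μ) • c μ - w) (b ν) = 0 := by
      intro ν
      simp [map_sub, map_sum, map_smul, LinearMap.sum_apply, LinearMap.smul_apply,
        LinearMap.sub_apply, smul_eq_mul, hdual, mul_ite, mul_one, mul_zero,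
        Finset.sum_ite_eq']
    have hz : B (∑ μ, B w (b μ) • c μ - w) = 0 := b.ext fun ν => by simpa using hb ν
    have := hnd.1 (∑ μ, B w (b μ) • c μ - w) (fun n => by rw [hz]; rfl)
    exact sub_eq_zero.mp this
  -- positive/negative definiteness kills vectors orthogonal to the bases
  have hEz : ∀ z ∈ Eplus, (∀ l : J, B z (vb l) = 0) → z = 0 := by
    intro z hz h0
    by_contra hne
    have hf : (B z).comp Eplus.subtype = 0 := vb.ext fun l => by simpa using h0 l
    have hzz : B z z = 0 := by
      have := LinearMap.congr_fun hf ⟨z, hz⟩; simpa using this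
    exact absurd hzz (ne_of_gt (hpos z hz hne))
  have hMz : ∀ z ∈ B.orthogonal Eplus, (∀ l : I, B z (ub l) = 0) → z = 0 := by
    intro z hz h0
    by_contra hne
    have hf : (B z).comp (B.orthogonal Eplus).subtype = 0 := ub.ext fun l => by simpa using h0 l
    have hzz : B z z = 0 := by
      have := LinearMap.congr_fun hf ⟨z, hz⟩; simpa using this
    exact absurd hzz (ne_of_lt (hneg z hz hne))
  -- reproduction inside Eplus
  have hrp : ∀ p ∈ Eplus, ∑ j, B (vb j : D) p • vd j = p := by
    intro p hp
    have hmem : p - ∑ j, B (vb j : D) p • vd j ∈ Eplus :=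
      sub_mem hp (Submodule.sum_mem _ fun j _ => Submodule.smul_mem _ _ (hvdmem j))
    have h0 : ∀ l, B (p - ∑ j, B (vb j : D) p • vd j) (vb l) = 0 := by
      intro l
      simp only [map_sub, map_sum, map_smul, LinearMap.sub_apply, LinearMap.sum_apply,
        LinearMap.smul_apply, smul_eq_mul, hvdual, mul_ite, mul_one, mul_zero,
        Finset.sum_ite_eq', Finset.mem_univ, if_true]
      rw [hs p (vb l)]; ring
    have := hEz _ hmem h0
    have := sub_eq_zero.mp this
    exact this.symm
  -- reproduction inside the orthogonal complement
  have hrm : ∀ q ∈ B.orthogonal Eplus, ∑ i, B (ub i : D) q • (-(ud i)) = q := by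
    intro q hq
    have hmem : q - ∑ i, B (ub i : D) q • (-(ud i)) ∈ B.orthogonal Eplus :=
      sub_mem hq (Submodule.sum_mem _ fun i _ =>
        Submodule.smul_mem _ _ (neg_mem (hudmem i)))
    have h0 : ∀ l, B (q - ∑ i, B (ub i : D) q • (-(ud i))) (ub l) = 0 := by
      intro l
      simp only [map_sub, map_sum, map_smul, map_neg, LinearMap.sub_apply,
        LinearMap.sum_apply, LinearMap.smul_apply, LinearMap.neg_apply, smul_eq_mul,
        hudual, mul_ite, mul_neg, mul_one, mul_zero, neg_neg, Finset.sum_ite_eq',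
        Finset.mem_univ, if_true]
      have e : ∀ m : I, (-if m = l then -((B ((ub m : D))) q) else 0)
          = (if m = l then (B ((ub m : D))) q else 0) := fun m => by split <;> simp
      simp [e, Finset.sum_ite_eq', hs q ((ub l : D))]
    have := hMz _ hmem h0
    have := sub_eq_zero.mp this
    exact this.symm
  -- the adapted dual pair
  set bt : J ⊕ I → D := Sum.elim vd (fun i => -(ud i)) with hbt
  set ct : J ⊕ I → D := Sum.elim (fun j => (vb j : D)) (fun i => (ub i : D)) with hct
  have hL2 : ∀ w : D, ∑ ν, B (ct ν) w • bt ν = w := by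
    intro w
    obtain ⟨p, q, hp, hq, hpq⟩ :=
      Submodule.codisjoint_iff_exists_add_eq.mp hcompl.codisjoint w
    have e1 : ∀ j : J, B (vb j : D) w = B (vb j : D) p := by
      intro j
      rw [← hpq, map_add, horth _ (vb j).2 q hq, add_zero]
    have e2 : ∀ i : I, B (ub i : D) w = B (ub i : D) q := by
      intro i
      rw [← hpq, map_add]
      rw [hs (ub i : D) p, horth _ hp _ (ub i).2, zero_add]
    rw [Fintype.sum_sum_type]
    simp only [hbt, hct, Sum.elim_inl, Sum.elim_inr]
    have t1 : ∑ j, (B ((vb j : D))) w • vd j = ∑ j, (B ((vb j : D))) p • vd j :=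
      Finset.sum_congr rfl fun j _ => by rw [e1 j]
    have t2 : ∑ i, (B ((ub i : D))) w • (-(ud i)) = ∑ i, (B ((ub i : D))) q • (-(ud i)) :=
      Finset.sum_congr rfl fun i _ => by rw [e2 i]
    rw [t1, t2, hrp p hp, hrm q hq]
    exact hpq
  -- torsion identities
  have hky : ∀ (j : J) (i : I), k (vd j) (ud i) y = B ⁅ud i, vd j⁆ y := by
    intro j i
    have h := htor (vd j) (ud i) y
    have h1 : k (ud i) y (vd j) = 0 := hmix (ud i) (vd j) (hvdmem j) y hy
    have h2 : k y (vd j) (ud i) = 0 := hmetric y (vd j) (hvdmem j) (ud i) (hudmem i)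
    have h3 : (⁅ud i, vd j⁆ : D) = -⁅vd j, ud i⁆ := by rw [← lie_skew]
    rw [h1, h2, add_zero, add_zero] at h
    rw [h3, map_neg, LinearMap.neg_apply]
    exact h
  have hkx : ∀ (i : I) (j : J), k (ub i : D) (vb j : D) x = -(B ⁅(ub i : D), (vb j : D)⁆ x) := by
    intro i j
    have h := htor (ub i : D) (vb j : D) x
    have h1 : k (vb j : D) x (ub i : D) = 0 := hmetric _ x hx _ (ub i).2
    have h2 : k x (ub i : D) (vb j : D) = 0 := hmix x (vb j : D) (vb j).2 _ (ub i).2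
    rw [h1, h2, add_zero, add_zero] at h
    exact h
  -- change basis in the double sum
  have step1 : ∀ l : ι,
      ∑ m : ι, k (b l) (b m) y * (k (c l) (c m) x - 2 * k (c m) (c l) x)
        = ∑ ν, k (b l) (bt ν) y * (k (c l) (ct ν) x - 2 * k (ct ν) (c l) x) := by
    intro l
    have := change_pair B b c bt ct hL1 hL2
      (pairT ((k (b l)).flip y) ((k (c l)).flip x) ((k.flip (c l)).flip x))
    simpa [LinearMap.flip_apply] using this
  have step2 : ∀ ν : J ⊕ I,
      ∑ l : ι, k (b l) (bt ν) y * (k (c l) (ct ν) x - 2 * k (ct ν) (c l) x)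
        = ∑ ν' : J ⊕ I, k (bt ν') (bt ν) y * (k (ct ν') (ct ν) x - 2 * k (ct ν) (ct ν') x) := by
    intro ν
    have := change_pair B b c bt ct hL1 hL2
      (pairT ((k.flip (bt ν)).flip y) ((k.flip (ct ν)).flip x) ((k (ct ν)).flip x))
    simpa [LinearMap.flip_apply] using this
  -- evaluate the four blocks
  set F : J ⊕ I → J ⊕ I → ℝ := fun ν' ν =>
    k (bt ν') (bt ν) y * (k (ct ν') (ct ν) x - 2 * k (ct ν) (ct ν') x) with hF
  have hFll : ∀ j l : J, F (Sum.inl j) (Sum.inl l) = 0 := by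
    intro j l
    have h : k (vd j) (vd l) y = 0 := hmetric _ _ (hvdmem l) _ hy
    simp [hF, hbt, hct, h]
  have hFrl : ∀ (i : I) (j : J), F (Sum.inr i) (Sum.inl j) = 0 := by
    intro i j
    have h : k (ud i) (vd j) y = 0 := hmetric _ _ (hvdmem j) _ hy
    simp [hF, hbt, hct, h]
  have hFrr : ∀ i i' : I, F (Sum.inr i) (Sum.inr i') = 0 := by
    intro i i'
    have h1 : k (ub i : D) (ub i' : D) x = 0 := hmix _ x hx _ (ub i').2
    have h2 : k (ub i' : D) (ub i : D) x = 0 := hmix _ x hx _ (ub i).2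
    simp [hF, hbt, hct, h1, h2]
  have hFlr : ∀ (j : J) (i : I), F (Sum.inl j) (Sum.inr i)
      = -2 * (B ⁅(ub i : D), (vb j : D)⁆ x * B ⁅ud i, vd j⁆ y) := by
    intro j i
    have h0 : k (vb j : D) (ub i : D) x = 0 := hmix _ x hx _ (ub i).2
    simp only [hF, hbt, hct, Sum.elim_inl, Sum.elim_inr, map_neg, LinearMap.neg_apply,
      h0, hky j i, hkx i j]
    ring
  have hsum : ∑ ν : J ⊕ I, ∑ ν' : J ⊕ I, F ν' ν
      = ∑ i : I, ∑ j : J, (-2) * (B ⁅(ub i : D), (vb j : D)⁆ x * B ⁅ud i, vd j⁆ y) := by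
    rw [Fintype.sum_sum_type]
    have e1 : ∀ l : J, ∑ ν' : J ⊕ I, F ν' (Sum.inl l) = 0 := by
      intro l
      rw [Fintype.sum_sum_type]
      simp [hFll, hFrl]
    have e2 : ∀ i : I, ∑ ν' : J ⊕ I, F ν' (Sum.inr i)
        = ∑ j : J, (-2) * (B ⁅(ub i : D), (vb j : D)⁆ x * B ⁅ud i, vd j⁆ y) := by
      intro i
      rw [Fintype.sum_sum_type]
      simp [hFlr, hFrr]
    simp only [e1, e2, Finset.sum_const_zero, zero_add]
  calc (1 / 2 : ℝ) * (∑ l : ι, ∑ m : ι,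
          k (b l) (b m) y * (k (c l) (c m) x - 2 * k (c m) (c l) x))
      = (1 / 2 : ℝ) * ∑ l : ι, ∑ ν : J ⊕ I,
          k (b l) (bt ν) y * (k (c l) (ct ν) x - 2 * k (ct ν) (c l) x) := by
        rw [Finset.sum_congr rfl fun l _ => step1 l]
    _ = (1 / 2 : ℝ) * ∑ ν : J ⊕ I, ∑ l : ι,
          k (b l) (bt ν) y * (k (c l) (ct ν) x - 2 * k (ct ν) (c l) x) := by
        rw [Finset.sum_comm]
    _ = (1 / 2 : ℝ) * ∑ ν : J ⊕ I, ∑ ν' : J ⊕ I, F ν' ν := by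
        rw [Finset.sum_congr rfl fun ν _ => step2 ν]
    _ = (1 / 2 : ℝ) * ∑ i : I, ∑ j : J,
          (-2) * (B ⁅(ub i : D), (vb j : D)⁆ x * B ⁅ud i, vd j⁆ y) := by rw [hsum]
    _ = - ∑ i : I, ∑ j : J, B ⁅(ub i : D), (vb j : D)⁆ x * B ⁅ud i, vd j⁆ y := by
        rw [Finset.mul_sum, ← Finset.sum_neg_distrib]
        refine Finset.sum_congr rfl fun i _ => ?_
        rw [Finset.mul_sum, ← Finset.sum_neg_distrib]
        exact Finset.sum_congr rfl fun j _ => by ring
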